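/- arXiv:2407.03840 — 3 statements merged into one kernel-verified Lean document; each statement's English description precedes it below -/
import Mathlib

section
/- Let H be a real Hilbert space, Γ ⊆ H linearly independent, (Ω, d_Ω) a metric space, and ϱ : Ω → Γ a uniformly continuous bijection. If (X_n)_{n∈ℕ} is a nested sequence of finite subsets of Ω with fill distance h_{X_n,Ω} := sup_{x∈Ω} min_{y∈X_n} d_Ω(x,y) → 0 as n → ∞, then ‖f − I_{ϱ(X_n)}(f)‖ → 0 as n → ∞ for every f in the closed linear span H_Γ of Γ. -/
open Filter
open scoped RealInnerProductSpace ENNReal Topology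

/-- Generalized interpolation operator: orthogonal projection onto the span of `Λ`. -/
noncomputable def interp {H : Type*} [NormedAddCommGroup H] [InnerProductSpace ℝ H]
    (Λ : Finset H) (f : H) : H :=
  haveI : FiniteDimensional ℝ (Submodule.span ℝ (Λ : Set H)) :=
    FiniteDimensional.span_of_finite ℝ Λ.finite_toSet
  (Submodule.orthogonalProjectionOnto (Submodule.span ℝ (Λ : Set H)) f : H)

/-- Generalized power function: distance from `g` to the span of `Λ`. -/
noncomputable def powerFn {H : Type*} [NormedAddCommGroup H] [InnerProductSpace ℝ H]
    (Λ : Finset H) (g : H) : ℝ := ‖g - interp Λ g‖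

section helpers

variable {H : Type*} [NormedAddCommGroup H] [InnerProductSpace ℝ H]

lemma interp_add (Λ : Finset H) (f g : H) :
    interp Λ (f + g) = interp Λ f + interp Λ g := by
  haveI : FiniteDimensional ℝ (Submodule.span ℝ (Λ : Set H)) :=
    FiniteDimensional.span_of_finite ℝ Λ.finite_toSet
  simp [interp, map_add]

lemma interp_smul (Λ : Finset H) (c : ℝ) (f : H) :
    interp Λ (c • f) = c • interp Λ f := by
  haveI : FiniteDimensional ℝ (Submodule.span ℝ (Λ : Set H)) :=
    FiniteDimensional.span_of_finite ℝ Λ.finite_toSet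
  simp [interp, map_smul]

lemma norm_interp_sub_le (Λ : Finset H) (f v : H)
    (hv : v ∈ Submodule.span ℝ (Λ : Set H)) :
    ‖f - interp Λ f‖ ≤ ‖f - v‖ := by
  haveI : FiniteDimensional ℝ (Submodule.span ℝ (Λ : Set H)) :=
    FiniteDimensional.span_of_finite ℝ Λ.finite_toSet
  rw [interp, ← Submodule.starProjection_apply, Submodule.starProjection_minimal]
  refine ciInf_le ⟨0, ?_⟩ (⟨v, hv⟩ : Submodule.span ℝ (Λ : Set H))
  rintro a ⟨x, rfl⟩
  exact norm_nonneg _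

lemma norm_interp_sub_lip (Λ : Finset H) (f g : H) :
    ‖f - interp Λ f‖ ≤ ‖g - interp Λ g‖ + ‖f - g‖ := by
  have key : f - interp Λ f = (g - interp Λ g) + ((f - g) - interp Λ (f - g)) := by
    have hfg : f = g + (f - g) := by abel
    calc f - interp Λ f = (g + (f - g)) - interp Λ (g + (f - g)) := by rw [← hfg]
      _ = (g - interp Λ g) + ((f - g) - interp Λ (f - g)) := by
          rw [interp_add]; abel
  rw [key]
  refine (norm_add_le _ _).trans (add_le_add_right ?_ _)
  have := norm_interp_sub_le Λ (f - g) 0 (Submodule.zero_mem _)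
  simpa using this

end helpers

/-- if `Γ` is linearly independent, `ϱ : Ω → Γ` is a uniformly continuous
bijection, and the fill distances of a nested sequence of finite subsets `X n` in the metric
space `Ω` tend to `0`, then the interpolants on `ϱ(X n)` converge to `f` for every `f` in
the closed linear span of `Γ`. -/
theorem stmt_5 {H : Type*} [NormedAddCommGroup H] [InnerProductSpace ℝ H] [CompleteSpace H]
    [DecidableEq H] {Ω : Type*} [MetricSpace Ω] (Γ : Set H)
    (hΓli : LinearIndependent (ι := Γ) ℝ Subtype.val)
    (ϱ : Ω → H) (hmem : ∀ x, ϱ x ∈ Γ)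
    (hinj : Function.Injective ϱ) (hsurj : ∀ g ∈ Γ, ∃ x, ϱ x = g)
    (huc : UniformContinuous ϱ)
    (X : ℕ → Finset Ω) (hnested : ∀ n, X n ⊆ X (n + 1))
    (hfill : Tendsto (fun n => ⨆ x : Ω, Metric.infEDist x (X n : Set Ω)) atTop (𝓝 0)) :
    ∀ f ∈ closure (Submodule.span ℝ Γ : Set H),
      Tendsto (fun n => ‖f - interp ((X n).image ϱ) f‖) atTop (𝓝 0) := by
  -- notation
  set e : ℕ → H → ℝ := fun n f => ‖f - interp ((X n).image ϱ) f‖ with he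
  -- Step B: convergence for each element of Γ
  have hB : ∀ g ∈ Γ, Tendsto (fun n => e n g) atTop (𝓝 0) := by
    intro g hg
    obtain ⟨x, rfl⟩ := hsurj g hg
    rw [NormedAddCommGroup.tendsto_nhds_zero]
    intro ε hε
    obtain ⟨δ, hδ, hδε⟩ := Metric.uniformContinuous_iff.mp huc ε hε
    have hev : ∀ᶠ n in atTop,
        (⨆ y : Ω, EMetric.infEdist y (X n : Set Ω)) < ENNReal.ofReal δ :=
      hfill.eventually_lt_const (by simpa using hδ)
    filter_upwards [hev] with n hn
    have hx : EMetric.infEdist x (X n : Set Ω) < ENNReal.ofReal δ :=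
      lt_of_le_of_lt (le_iSup (fun y : Ω => EMetric.infEdist y (X n : Set Ω)) x) hn
    obtain ⟨y, hy, hxy⟩ := EMetric.infEdist_lt_iff.mp hx
    have hdist : dist x y < δ := by
      rwa [edist_lt_ofReal] at hxy
    have hmemspan : ϱ y ∈ Submodule.span ℝ (((X n).image ϱ : Finset H) : Set H) :=
      Submodule.subset_span (by simpa using Finset.mem_image_of_mem ϱ hy)
    have hle : e n (ϱ x) ≤ ‖ϱ x - ϱ y‖ :=
      norm_interp_sub_le _ _ _ hmemspan
    have hlt : ‖ϱ x - ϱ y‖ < ε := by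
      rw [← dist_eq_norm]
      exact hδε hdist
    have : e n (ϱ x) < ε := lt_of_le_of_lt hle hlt
    rwa [Real.norm_eq_abs, abs_of_nonneg (show 0 ≤ e n (ϱ x) from norm_nonneg _)]
  -- Step C: convergence on the span of Γ
  have hC : ∀ f ∈ Submodule.span ℝ Γ, Tendsto (fun n => e n f) atTop (𝓝 0) := by
    intro f hf
    induction hf using Submodule.span_induction with
    | mem g hg => exact hB g hg
    | zero =>
        have : ∀ n, e n 0 = 0 := by
          intro n
          have h0 : interp ((X n).image ϱ) (0 : H) = 0 := by
            have := interp_smul ((X n).image ϱ) (0 : ℝ) (0 : H)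
            simpa using this
          simp [he, h0]
        simp only [this]; exact tendsto_const_nhds
    | add u v hu hv ihu ihv =>
        have hbound : ∀ n, e n (u + v) ≤ e n u + e n v := by
          intro n
          have : (u + v) - interp ((X n).image ϱ) (u + v)
              = (u - interp ((X n).image ϱ) u) + (v - interp ((X n).image ϱ) v) := by
            rw [interp_add]; abel
          simp only [he, this]
          exact norm_add_le _ _
        have hnn : ∀ n, 0 ≤ e n (u + v) := fun n => norm_nonneg _
        have hsum : Tendsto (fun n => e n u + e n v) atTop (𝓝 0) := by
          simpa using ihu.add ihv
        exact squeeze_zero hnn hbound hsum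
    | smul c u hu ihu =>
        have heq : ∀ n, e n (c • u) = |c| * e n u := by
          intro n
          have : (c • u) - interp ((X n).image ϱ) (c • u)
              = c • (u - interp ((X n).image ϱ) u) := by
            rw [interp_smul, smul_sub]
          simp [he, this, norm_smul, Real.norm_eq_abs]
        simp only [heq]
        simpa using ihu.const_mul |c|
  -- Final step: closure via uniform Lipschitz bound
  intro f hf
  rw [NormedAddCommGroup.tendsto_nhds_zero]
  intro ε hε
  obtain ⟨g, hg, hfg⟩ := Metric.mem_closure_iff.mp hf (ε / 2) (by linarith)
  have hgε : ∀ᶠ n in atTop, e n g < ε / 2 := by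
    have := (NormedAddCommGroup.tendsto_nhds_zero.mp (hC g hg)) (ε / 2) (by linarith)
    filter_upwards [this] with n hn
    rwa [Real.norm_eq_abs, abs_of_nonneg (show 0 ≤ e n g from norm_nonneg _)] at hn
  filter_upwards [hgε] with n hn
  have hlip : e n f ≤ e n g + ‖f - g‖ := norm_interp_sub_lip _ _ _
  have : e n f < ε := by
    have : ‖f - g‖ < ε / 2 := by rwa [← dist_eq_norm]
    linarith
  simpa [abs_of_nonneg (norm_nonneg _)] using this
end

section
/- Let H be a real Hilbert space, Γ ⊆ H a totally bounded subset, (g_i)_{i∈ℕ} a sequence in Γ, and Λ_n := {g_1,…,g_n} linearly independent for each n ∈ ℕ. Then P_{Λ_n}(g_{n+1}) → 0 as n → ∞. -/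
open Filter
open scoped RealInnerProductSpace ENNReal Topology

/-- if `Γ` is totally bounded, `(g_i)` is a sequence in `Γ`, and each
`Λ_n = {g_1, …, g_n}` is linearly independent, then `P_{Λ_n}(g_{n+1}) → 0`.
(`0`-indexed: `Λ n = {g_0, …, g_{n-1}}` and the claim is `P_{Λ n}(g_n) → 0`.) -/
theorem stmt_8 {H : Type*} [NormedAddCommGroup H] [InnerProductSpace ℝ H] [CompleteSpace H]
    [DecidableEq H] (Γ : Set H) (hΓ : TotallyBounded Γ)
    (g : ℕ → H) (hmem : ∀ i, g i ∈ Γ)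
    (hli : ∀ n, LinearIndependent (ι := (((Finset.range n).image g : Finset H) : Set H))
      ℝ Subtype.val) :
    Tendsto (fun n => powerFn ((Finset.range n).image g) (g n)) atTop (𝓝 0) := by
  have hnonneg : ∀ n, 0 ≤ powerFn ((Finset.range n).image g) (g n) := fun n => norm_nonneg _
  have key : ∀ m n : ℕ, m < n →
      powerFn ((Finset.range n).image g) (g n) ≤ ‖g n - g m‖ := by
    intro m n hmn
    have hgm : g m ∈ Submodule.span ℝ (((Finset.range n).image g : Finset H) : Set H) :=
      Submodule.subset_span (by simp [Finset.mem_image]; exact ⟨m, hmn, rfl⟩)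
    unfold powerFn interp
    rw [Submodule.coe_orthogonalProjectionOnto_apply, Submodule.starProjection_minimal]
    exact ciInf_le_of_le ⟨0, fun x ⟨y, hy⟩ => hy ▸ norm_nonneg _⟩ ⟨g m, hgm⟩ le_rfl
  rw [Metric.tendsto_atTop]
  intro ε hε
  obtain ⟨T, hTfin, hTcov⟩ := (Metric.totallyBounded_iff.mp hΓ) (ε / 2) (by linarith)
  have hchoice : ∀ n : ℕ, ∃ t ∈ T, g n ∈ Metric.ball t (ε / 2) := by
    intro n
    have := hTcov (hmem n)
    simpa using this
  choose t ht hball using hchoice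
  set S : Set ℕ := {n | ε ≤ powerFn ((Finset.range n).image g) (g n)} with hS
  have hinj : Set.InjOn t S := by
    intro m hm n hn htmn
    by_contra hne
    wlog hmn : m < n generalizing m n
    · exact this hn hm htmn.symm (Ne.symm hne) (by omega)
    have hdist : ‖g n - g m‖ < ε := by
      have h1 := hball m
      have h2 := hball n
      rw [htmn] at h1
      calc ‖g n - g m‖ = dist (g n) (g m) := (dist_eq_norm _ _).symm
        _ ≤ dist (g n) (t n) + dist (t n) (g m) := dist_triangle _ _ _
        _ < ε / 2 + ε / 2 := by
            rw [Metric.mem_ball] at h1 h2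
            rw [dist_comm (t n)]; linarith
        _ = ε := by ring
    have := key m n hmn
    have := hn
    simp only [hS, Set.mem_setOf_eq] at this
    linarith
  have hSfin : S.Finite :=
    Set.Finite.of_finite_image (hTfin.subset (by rintro x ⟨n, hn, rfl⟩; exact ht n)) hinj
  obtain ⟨N, hN⟩ := hSfin.bddAbove
  refine ⟨N + 1, fun n hn => ?_⟩
  have hnS : n ∉ S := fun h => by have := hN h; omega
  simp only [hS, Set.mem_setOf_eq, not_le] at hnS
  rw [Real.dist_eq, sub_zero, abs_of_nonneg (hnonneg n)]
  exact hnS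
end

section
/- Let H be a real Hilbert space, β ∈ [0, ∞), Γ ⊆ H totally bounded, and f in the closed linear span H_Γ of Γ. Suppose (g_n)_{n∈ℕ} is a sequence in Γ such that Λ_n := {g_1,…,g_n} is linearly independent for every n and the β-greedy selection rule holds: |⟪f − I_{Λ_n}(f), g_{n+1}⟫|^β · P_{Λ_n}(g_{n+1})^{1−β} = sup_{g∈Γ} |⟪f − I_{Λ_n}(f), g⟫|^β · P_{Λ_n}(g)^{1−β} for every n. Then ‖f − I_{Λ_n}(f)‖ → 0 as n → ∞. -/
open Filter
open scoped RealInnerProductSpace ENNReal Topology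

section Helpers

variable {H : Type*} [NormedAddCommGroup H] [InnerProductSpace ℝ H]

lemma interp_mem (Λ : Finset H) (f : H) : interp Λ f ∈ Submodule.span ℝ (Λ : Set H) := by
  haveI : FiniteDimensional ℝ (Submodule.span ℝ (Λ : Set H)) :=
    FiniteDimensional.span_of_finite ℝ Λ.finite_toSet
  exact (Submodule.orthogonalProjectionOnto (Submodule.span ℝ (Λ : Set H)) f).2

lemma interp_inner_eq_zero (Λ : Finset H) (f : H) {v : H}
    (hv : v ∈ Submodule.span ℝ (Λ : Set H)) : ⟪f - interp Λ f, v⟫ = 0 := by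
  haveI : FiniteDimensional ℝ (Submodule.span ℝ (Λ : Set H)) :=
    FiniteDimensional.span_of_finite ℝ Λ.finite_toSet
  exact Submodule.starProjection_inner_eq_zero f v hv

lemma interp_min (Λ : Finset H) (f : H) {v : H}
    (hv : v ∈ Submodule.span ℝ (Λ : Set H)) : ‖f - interp Λ f‖ ≤ ‖f - v‖ := by
  have hmem : interp Λ f - v ∈ Submodule.span ℝ (Λ : Set H) :=
    Submodule.sub_mem _ (interp_mem Λ f) hv
  have h0 : ⟪f - interp Λ f, interp Λ f - v⟫ = 0 := interp_inner_eq_zero Λ f hmem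
  have hdecomp : f - v = (f - interp Λ f) + (interp Λ f - v) := by abel
  have hsq : ‖f - v‖ ^ 2 = ‖f - interp Λ f‖ ^ 2 + ‖interp Λ f - v‖ ^ 2 := by
    rw [hdecomp, norm_add_sq_real, h0]; ring
  nlinarith [norm_nonneg (f - v), norm_nonneg (f - interp Λ f), norm_nonneg (interp Λ f - v)]

lemma abs_inner_le_powerFn (Λ : Finset H) (f x : H) :
    |⟪f - interp Λ f, x⟫| ≤ ‖f - interp Λ f‖ * powerFn Λ x := by
  have h0 : ⟪f - interp Λ f, interp Λ x⟫ = 0 := interp_inner_eq_zero Λ f (interp_mem Λ x)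
  have : ⟪f - interp Λ f, x⟫ = ⟪f - interp Λ f, x - interp Λ x⟫ := by
    rw [inner_sub_right, h0]; ring
  rw [this, powerFn]
  exact abs_real_inner_le_norm _ _

lemma infinite_biUnion_aux {α β : Type*} {S : Set α} (hS : S.Infinite) (t : Finset β)
    (B : β → Set α) (hsub : S ⊆ ⋃ b ∈ t, B b) : ∃ b ∈ t, (S ∩ B b).Infinite := by
  by_contra hc
  push_neg at hc
  apply hS
  have heq : S = ⋃ b ∈ t, (S ∩ B b) := by
    apply Set.Subset.antisymm
    · intro x hx
      obtain ⟨b, hb, hxb⟩ := Set.mem_iUnion₂.mp (hsub hx)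
      exact Set.mem_iUnion₂.mpr ⟨b, hb, hx, hxb⟩
    · intro x hx
      obtain ⟨b, hb, hxb⟩ := Set.mem_iUnion₂.mp hx
      exact hxb.1
  rw [heq]
  exact Set.Finite.biUnion t.finite_toSet fun b hb => hc b hb

end Helpers

set_option maxHeartbeats 1000000 in
/-- convergence of the `β`-greedy algorithm, `β ∈ [0, ∞)`, on a totally bounded
set `Γ`. The sequence is `0`-indexed: `Λ n = {g_0, …, g_{n-1}}`, and the selection rule states
that `g_n` maximizes `γ ↦ |⟪f - I_{Λ n}(f), γ⟫|^β * P_{Λ n}(γ)^(1-β)` over `γ ∈ Γ`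
(here `^` is the real power `Real.rpow`). -/
theorem stmt_13 {H : Type*} [NormedAddCommGroup H] [InnerProductSpace ℝ H] [CompleteSpace H]
    [DecidableEq H] (β : ℝ) (hβ : 0 ≤ β) (Γ : Set H) (hΓ : TotallyBounded Γ)
    (f : H) (hf : f ∈ closure (Submodule.span ℝ Γ : Set H))
    (g : ℕ → H) (hmem : ∀ n, g n ∈ Γ)
    (hli : ∀ n, LinearIndependent (ι := (((Finset.range n).image g : Finset H) : Set H))
      ℝ Subtype.val)
    (hgreedy : ∀ (n : ℕ), ∀ γ ∈ Γ,
      |⟪f - interp ((Finset.range n).image g) f, γ⟫| ^ β *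
          powerFn ((Finset.range n).image g) γ ^ (1 - β) ≤
        |⟪f - interp ((Finset.range n).image g) f, g n⟫| ^ β *
          powerFn ((Finset.range n).image g) (g n) ^ (1 - β)) :
    Tendsto (fun n => ‖f - interp ((Finset.range n).image g) f‖) atTop (𝓝 0) := by
  classical
  set Λ : ℕ → Finset H := fun n => (Finset.range n).image g with hΛdef
  set r : ℕ → H := fun n => f - interp (Λ n) f with hrdef
  have hspanmono : ∀ {m n : ℕ}, m ≤ n →
      Submodule.span ℝ ((Λ m : Set H)) ≤ Submodule.span ℝ ((Λ n : Set H)) := by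
    intro m n hmn
    apply Submodule.span_mono
    intro x hx
    simp only [Λ, Finset.coe_image, Set.mem_image, Finset.mem_coe, Finset.mem_range] at hx ⊢
    obtain ⟨i, hi, rfl⟩ := hx
    exact ⟨i, lt_of_lt_of_le hi hmn, rfl⟩
  have hanti : Antitone fun n => ‖r n‖ := by
    intro m n hmn
    exact interp_min (Λ n) f (hspanmono hmn (interp_mem (Λ m) f))
  have hub : ∀ n, ‖r n‖ ≤ ‖f‖ := by
    intro n
    simpa using interp_min (Λ n) f (Submodule.zero_mem _)
  set L := ⨅ n, ‖r n‖ with hLdef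
  have hbdd : BddBelow (Set.range fun n => ‖r n‖) := by
    refine ⟨0, ?_⟩; rintro x ⟨n, rfl⟩; exact norm_nonneg _
  have htL : Tendsto (fun n => ‖r n‖) atTop (𝓝 L) := tendsto_atTop_ciInf hanti hbdd
  have hLle : ∀ n, L ≤ ‖r n‖ := fun n => ciInf_le hbdd n
  have hL0 : 0 ≤ L := le_ciInf fun n => norm_nonneg _
  suffices hLz : L = 0 by rwa [hLz] at htL
  by_contra hLne
  have hLpos : 0 < L := hL0.lt_of_ne (Ne.symm hLne)
  have hfpos : 0 < ‖f‖ := lt_of_lt_of_le hLpos ((hLle 0).trans (hub 0))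
  -- choose a finite linear combination h close to f
  obtain ⟨h, hhmem, hhdist⟩ :=
    Metric.mem_closure_iff.mp hf (L ^ 2 / (2 * (‖f‖ + 1))) (by positivity)
  rw [dist_eq_norm] at hhdist
  obtain ⟨cf, hsupp, hsum⟩ := Submodule.mem_span_set.mp hhmem
  -- inner products with h stay bounded below
  have hinner_f : ∀ n, ⟪r n, f⟫ = ‖r n‖ ^ 2 := by
    intro n
    have h0 : ⟪r n, interp (Λ n) f⟫ = 0 := interp_inner_eq_zero (Λ n) f (interp_mem (Λ n) f)
    have : ⟪r n, f⟫ = ⟪r n, r n⟫ + ⟪r n, interp (Λ n) f⟫ := by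
      rw [← inner_add_right]
      congr 1
      simp [hrdef]
    rw [this, h0, real_inner_self_eq_norm_sq]
    ring
  have hinner_h : ∀ n, L ^ 2 / 2 ≤ ⟪r n, h⟫ := by
    intro n
    have h1 : ⟪r n, h⟫ = ⟪r n, f⟫ - ⟪r n, f - h⟫ := by
      rw [inner_sub_right]; ring
    have h2 : |⟪r n, f - h⟫| ≤ ‖f‖ * (L ^ 2 / (2 * (‖f‖ + 1))) := by
      calc |⟪r n, f - h⟫| ≤ ‖r n‖ * ‖f - h‖ := abs_real_inner_le_norm _ _
        _ ≤ ‖f‖ * (L ^ 2 / (2 * (‖f‖ + 1))) :=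
          mul_le_mul (hub n) hhdist.le (norm_nonneg _) (norm_nonneg _)
    have h3 := hLle n
    have h4 := abs_le.mp h2
    have h5 : ‖f‖ * (L ^ 2 / (2 * (‖f‖ + 1))) ≤ L ^ 2 / 2 := by
      have heq : ‖f‖ * (L ^ 2 / (2 * (‖f‖ + 1))) = ‖f‖ * L ^ 2 / (2 * (‖f‖ + 1)) := by ring
      rw [heq, div_le_div_iff₀ (by positivity) (by norm_num)]
      nlinarith [sq_nonneg L, hfpos]
    nlinarith [hinner_f n, sq_nonneg (‖r n‖ - L), hL0]
  -- expand h as a finite sum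
  have hsum' : ∀ n, ⟪r n, h⟫ = ∑ γ ∈ cf.support, cf γ * ⟪r n, γ⟫ := by
    intro n
    rw [← hsum, Finsupp.sum, inner_sum]
    exact Finset.sum_congr rfl fun γ _ => real_inner_smul_right _ _ _
  set k : ℕ := cf.support.card with hkdef
  have hksupp : cf.support.Nonempty := by
    by_contra hc
    rw [Finset.not_nonempty_iff_eq_empty] at hc
    have := hinner_h 0
    rw [hsum' 0, hc, Finset.sum_empty] at this
    nlinarith
  have hkpos : (0 : ℝ) < k := by
    have := Finset.card_pos.mpr hksupp
    exact_mod_cast this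
  set q : ℝ := L ^ 2 / (2 * k) with hqdef
  have hqpos : 0 < q := by positivity
  -- pigeonhole: for every n some term of the sum is large
  have hbig : ∀ n : ℕ, ∃ γ ∈ cf.support, q ≤ |cf γ * ⟪r n, γ⟫| := by
    intro n
    by_contra hc
    push_neg at hc
    have hlt : ∑ γ ∈ cf.support, |cf γ * ⟪r n, γ⟫| < ∑ _γ ∈ cf.support, q :=
      Finset.sum_lt_sum_of_nonempty hksupp fun γ hγ => hc γ hγ
    have habs : ⟪r n, h⟫ ≤ ∑ γ ∈ cf.support, |cf γ * ⟪r n, γ⟫| := by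
      rw [hsum' n]
      exact le_trans (le_abs_self _) (Finset.abs_sum_le_sum_abs _ _)
    have hsq : ∑ _γ ∈ cf.support, q = k * q := by
      rw [Finset.sum_const, nsmul_eq_mul, hkdef]
    have hkq : (k : ℝ) * q = L ^ 2 / 2 := by
      have hk0 : (k : ℝ) ≠ 0 := ne_of_gt hkpos
      rw [hqdef]
      field_simp
    have := hinner_h n
    nlinarith
  obtain ⟨γ₀, hγ₀supp, hN₁⟩ := infinite_biUnion_aux (Set.infinite_univ (α := ℕ)) cf.support
    (fun γ => {n | q ≤ |cf γ * ⟪r n, γ⟫|})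
    (by intro n _
        obtain ⟨γ, hγ, hqγ⟩ := hbig n
        exact Set.mem_iUnion₂.mpr ⟨γ, hγ, hqγ⟩)
  set N₁ : Set ℕ := Set.univ ∩ {n | q ≤ |cf γ₀ * ⟪r n, γ₀⟫|} with hN₁def
  have hγ₀Γ : γ₀ ∈ Γ := hsupp hγ₀supp
  have hcfne : cf γ₀ ≠ 0 := Finsupp.mem_support_iff.mp hγ₀supp
  have hcfpos : 0 < |cf γ₀| := abs_pos.mpr hcfne
  set cc : ℝ := q / |cf γ₀| with hccdef
  have hccpos : 0 < cc := by positivity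
  have hccle : ∀ n ∈ N₁, cc ≤ |⟪r n, γ₀⟫| := by
    intro n hn
    have hq' : q ≤ |cf γ₀| * |⟪r n, γ₀⟫| := by
      have := hn.2
      rwa [Set.mem_setOf_eq, abs_mul] at this
    rw [hccdef, div_le_iff₀ hcfpos]
    linarith [mul_comm |cf γ₀| |⟪r n, γ₀⟫|]
  -- norm of γ₀ is positive
  have habs_le : ∀ n (x : H), |⟪r n, x⟫| ≤ ‖f‖ * powerFn (Λ n) x := by
    intro n x
    calc |⟪r n, x⟫| ≤ ‖r n‖ * powerFn (Λ n) x := abs_inner_le_powerFn (Λ n) f x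
      _ ≤ ‖f‖ * powerFn (Λ n) x := by
        have : 0 ≤ powerFn (Λ n) x := norm_nonneg _
        nlinarith [hub n]
  have hpob : ∀ n (x : H), powerFn (Λ n) x ≤ ‖x‖ := by
    intro n x
    simpa [powerFn] using interp_min (Λ n) x (Submodule.zero_mem _)
  obtain ⟨n₀, hn₀⟩ := hN₁.nonempty
  have hγ₀norm : 0 < ‖γ₀‖ := by
    have h1 := hccle n₀ hn₀
    have h2 := habs_le n₀ γ₀
    have h3 := hpob n₀ γ₀
    nlinarith
  set d : ℝ := min ((cc / ‖f‖) ^ (1 - β)) (‖γ₀‖ ^ (1 - β)) with hddef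
  have hdpos : 0 < d :=
    lt_min (Real.rpow_pos_of_pos (div_pos hccpos hfpos) _) (Real.rpow_pos_of_pos hγ₀norm _)
  set δ : ℝ := cc ^ β * d with hδdef
  have hδpos : 0 < δ := mul_pos (Real.rpow_pos_of_pos hccpos _) hdpos
  set ε : ℝ := δ / ‖f‖ ^ β with hεdef
  have hfβpos : (0 : ℝ) < ‖f‖ ^ β := Real.rpow_pos_of_pos hfpos _
  have hεpos : 0 < ε := div_pos hδpos hfβpos
  -- key estimate: on N₁ the power function of the selected point is bounded below
  have hkey : ∀ n ∈ N₁, ε ≤ powerFn (Λ n) (g n) := by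
    intro n hn
    set pγ := powerFn (Λ n) γ₀ with hpγdef
    set pg := powerFn (Λ n) (g n) with hpgdef
    have hpγnn : 0 ≤ pγ := norm_nonneg _
    have hpgnn : 0 ≤ pg := norm_nonneg _
    have hcc_ip := hccle n hn
    have hpγ1 : cc / ‖f‖ ≤ pγ := by
      rw [div_le_iff₀ hfpos]
      calc cc ≤ |⟪r n, γ₀⟫| := hcc_ip
        _ ≤ ‖f‖ * pγ := habs_le n γ₀
        _ = pγ * ‖f‖ := mul_comm _ _
    have hpγpos : 0 < pγ := lt_of_lt_of_le (div_pos hccpos hfpos) hpγ1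
    have hpγ2 : pγ ≤ ‖γ₀‖ := hpob n γ₀
    have hdle : d ≤ pγ ^ (1 - β) := by
      rcases le_or_gt β 1 with hβ1 | hβ1
      · calc d ≤ (cc / ‖f‖) ^ (1 - β) := min_le_left _ _
          _ ≤ pγ ^ (1 - β) := Real.rpow_le_rpow (div_pos hccpos hfpos).le hpγ1 (by linarith)
      · calc d ≤ ‖γ₀‖ ^ (1 - β) := min_le_right _ _
          _ ≤ pγ ^ (1 - β) := Real.rpow_le_rpow_of_nonpos hpγpos hpγ2 (by linarith)
    have hlhs : δ ≤ |⟪r n, γ₀⟫| ^ β * pγ ^ (1 - β) := by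
      apply mul_le_mul (Real.rpow_le_rpow hccpos.le hcc_ip hβ) hdle hdpos.le
      exact Real.rpow_nonneg (abs_nonneg _) _
    have hgr := hgreedy n γ₀ hγ₀Γ
    have hδrhs : δ ≤ |⟪r n, g n⟫| ^ β * pg ^ (1 - β) := le_trans hlhs hgr
    have hig : |⟪r n, g n⟫| ≤ ‖f‖ * pg := habs_le n (g n)
    have hpgpos : 0 < pg := by
      rcases lt_or_eq_of_le hpgnn with hpg | hpg
      · exact hpg
      · exfalso
        have hig0 : |⟪r n, g n⟫| = 0 := le_antisymm (by rw [← hpg] at hig; linarith) (abs_nonneg _)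
        rcases eq_or_ne β 0 with hβ0 | hβ0
        · rw [hβ0] at hδrhs
          rw [← hpg] at hδrhs
          simp only [Real.rpow_zero, sub_zero, Real.rpow_one, one_mul] at hδrhs
          linarith
        · rw [hig0, Real.zero_rpow hβ0, zero_mul] at hδrhs
          linarith
    have hrhs : |⟪r n, g n⟫| ^ β * pg ^ (1 - β) ≤ ‖f‖ ^ β * pg := by
      have h1 : |⟪r n, g n⟫| ^ β ≤ (‖f‖ * pg) ^ β :=
        Real.rpow_le_rpow (abs_nonneg _) hig hβ
      have h2 : (‖f‖ * pg) ^ β = ‖f‖ ^ β * pg ^ β := Real.mul_rpow hfpos.le hpgnn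
      calc |⟪r n, g n⟫| ^ β * pg ^ (1 - β) ≤ ‖f‖ ^ β * pg ^ β * pg ^ (1 - β) := by
            apply mul_le_mul_of_nonneg_right _ (Real.rpow_nonneg hpgnn _)
            rw [← h2]; exact h1
        _ = ‖f‖ ^ β * (pg ^ β * pg ^ (1 - β)) := by ring
        _ = ‖f‖ ^ β * pg := by
            rw [← Real.rpow_add hpgpos, show β + (1 - β) = 1 by ring, Real.rpow_one]
    have : δ ≤ ‖f‖ ^ β * pg := le_trans hδrhs hrhs
    rw [hεdef, div_le_iff₀ hfβpos]
    linarith [mul_comm (‖f‖ ^ β) pg]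
  -- separation: selected points on N₁ are ε-separated from all previous points
  have hsep : ∀ m n : ℕ, m < n → n ∈ N₁ → ε ≤ ‖g n - g m‖ := by
    intro m n hmn hn
    have hgm : g m ∈ Submodule.span ℝ ((Λ n : Set H)) := by
      apply Submodule.subset_span
      simp only [Λ, Finset.coe_image, Set.mem_image, Finset.mem_coe, Finset.mem_range]
      exact ⟨m, hmn, rfl⟩
    calc ε ≤ powerFn (Λ n) (g n) := hkey n hn
      _ ≤ ‖g n - g m‖ := interp_min (Λ n) (g n) hgm
  -- total boundedness gives a contradiction
  obtain ⟨t, htfin, htcov⟩ := Metric.totallyBounded_iff.mp hΓ (ε / 3) (by positivity)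
  obtain ⟨y, _, hT⟩ := infinite_biUnion_aux hN₁ htfin.toFinset
    (fun y => {n | g n ∈ Metric.ball y (ε / 3)})
    (by intro n _
        have := htcov (hmem n)
        obtain ⟨y, hy, hball⟩ := Set.mem_iUnion₂.mp this
        exact Set.mem_iUnion₂.mpr ⟨y, htfin.mem_toFinset.mpr hy, hball⟩)
  obtain ⟨m, hm⟩ := hT.nonempty
  obtain ⟨n, hn, hmn⟩ := hT.exists_gt m
  have hdist : ‖g n - g m‖ < ε := by
    have h1 : dist (g n) y < ε / 3 := hn.2
    have h2 : dist (g m) y < ε / 3 := hm.2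
    have := dist_triangle (g n) y (g m)
    rw [dist_comm (g m) y] at h2
    rw [← dist_eq_norm]
    linarith
  have := hsep m n hmn hn.1
  linarith
end
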